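/- Let q and r be positive natural numbers and let B be a real q×r matrix. Then B·(I_r + BᵀB)^{-1/2} = (I_q + BBᵀ)^{-1/2}·B. -/

import Mathlib

open Matrix

/-- Inverse of the unique symmetric positive semidefinite square root of a positive
(semi)definite real matrix (junk value `0` if `P` is not positive semidefinite). -/
noncomputable def invSqrt {n : Type*} [Fintype n] [DecidableEq n]
    (P : Matrix n n ℝ) : Matrix n n ℝ := by
  classical exact if h : P.PosSemidef then
    (h.1.eigenvectorUnitary.1 * diagonal (Real.sqrt ∘ h.1.eigenvalues) *
      (star h.1.eigenvectorUnitary : Matrix n n ℝ))⁻¹ else 0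

namespace Matrix.PosSemidef

noncomputable def sqrt {n : Type*} [Fintype n] [DecidableEq n] {P : Matrix n n ℝ} (h : P.PosSemidef) :
    Matrix n n ℝ :=
  h.1.eigenvectorUnitary.1 * diagonal (Real.sqrt ∘ h.1.eigenvalues) *
      (star h.1.eigenvectorUnitary : Matrix n n ℝ)

lemma posSemidef_sqrt {n : Type*} [Fintype n] [DecidableEq n] {P : Matrix n n ℝ}
    (h : P.PosSemidef) : h.sqrt.PosSemidef := by
  have hd : (diagonal (Real.sqrt ∘ h.1.eigenvalues)).PosSemidef :=
    posSemidef_diagonal_iff.mpr fun i => Real.sqrt_nonneg _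
  have := hd.mul_mul_conjTranspose_same (h.1.eigenvectorUnitary.1)
  simpa [sqrt, Unitary.coe_star, star_eq_conjTranspose] using this

lemma sqrt_mul_self {n : Type*} [Fintype n] [DecidableEq n] {P : Matrix n n ℝ}
    (h : P.PosSemidef) : h.sqrt * h.sqrt = P := by
  have hU : (star h.1.eigenvectorUnitary : Matrix n n ℝ) * h.1.eigenvectorUnitary.1 = 1 :=
    Unitary.coe_star_mul_self _
  have hDD : diagonal (Real.sqrt ∘ h.1.eigenvalues) * diagonal (Real.sqrt ∘ h.1.eigenvalues)
      = diagonal (RCLike.ofReal ∘ h.1.eigenvalues) := by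
    rw [diagonal_mul_diagonal]
    congr 1
    funext i
    simp [Real.mul_self_sqrt (h.eigenvalues_nonneg i)]
  conv_rhs => rw [h.1.spectral_theorem, Unitary.conjStarAlgAut_apply]
  simp only [sqrt, Matrix.mul_assoc]
  rw [← Matrix.mul_assoc (star h.1.eigenvectorUnitary : Matrix n n ℝ), hU, Matrix.one_mul,
    ← Matrix.mul_assoc (diagonal _), hDD]

end Matrix.PosSemidef

section aux

variable {m n : Type*} [Fintype m] [Fintype n] [DecidableEq m] [DecidableEq n]

lemma aux_trace_nonneg (A : Matrix m n ℝ) : 0 ≤ (Aᵀ * A).trace := by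
  rw [Matrix.trace]
  refine Finset.sum_nonneg fun j _ => ?_
  simp only [Matrix.diag_apply, Matrix.mul_apply, Matrix.transpose_apply]
  exact Finset.sum_nonneg fun i _ => mul_self_nonneg _

lemma aux_trace_eq_zero (A : Matrix m n ℝ) (h : (Aᵀ * A).trace = 0) : A = 0 := by
  ext i j
  have h0 : ∀ p ∈ (Finset.univ : Finset n),
      (0 : ℝ) ≤ ((Aᵀ * A).diag) p := fun p _ => by
    simp only [Matrix.diag_apply, Matrix.mul_apply, Matrix.transpose_apply]
    exact Finset.sum_nonneg fun i _ => mul_self_nonneg _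
  have hj : ((Aᵀ * A).diag) j = 0 :=
    (Finset.sum_eq_zero_iff_of_nonneg h0).mp h j (Finset.mem_univ j)
  simp only [Matrix.diag_apply, Matrix.mul_apply, Matrix.transpose_apply] at hj
  have := (Finset.sum_eq_zero_iff_of_nonneg
    (fun i (_ : i ∈ (Finset.univ : Finset m)) => mul_self_nonneg (A i j))).mp hj i
    (Finset.mem_univ i)
  have : A i j = 0 := by nlinarith [this]
  simpa using this

/-- Sylvester-type lemma: if `S` is PSD with unit determinant (i.e. positive definite),
`T` is PSD, and `S * M + M * T = 0`, then `M = 0`. -/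
lemma aux_sylvester {S : Matrix m m ℝ} {T : Matrix n n ℝ} {M : Matrix m n ℝ}
    (hS : S.PosSemidef) (hT : T.PosSemidef) (hdet : IsUnit S.det)
    (h : S * M + M * T = 0) : M = 0 := by
  set D := hS.sqrt with hD
  set C := hT.sqrt with hC
  have hDsym : Dᵀ = D := by
    have := hS.posSemidef_sqrt.isHermitian
    rwa [Matrix.IsHermitian, Matrix.conjTranspose_eq_transpose_of_trivial] at this
  have hCsym : Cᵀ = C := by
    have := hT.posSemidef_sqrt.isHermitian
    rwa [Matrix.IsHermitian, Matrix.conjTranspose_eq_transpose_of_trivial] at this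
  have hDD : D * D = S := hS.sqrt_mul_self
  have hCC : C * C = T := hT.sqrt_mul_self
  have hSM : S * M = -(M * T) := add_eq_zero_iff_eq_neg.mp h
  -- trace identities
  have t1 : ((D * M)ᵀ * (D * M)).trace = (Mᵀ * (S * M)).trace := by
    rw [Matrix.transpose_mul, hDsym, Matrix.mul_assoc Mᵀ D, ← Matrix.mul_assoc D D M, hDD]
  have t2 : ((M * C)ᵀ * (M * C)).trace = (Mᵀ * (M * T)).trace := by
    rw [Matrix.transpose_mul, hCsym, Matrix.mul_assoc C Mᵀ, Matrix.trace_mul_comm,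
      Matrix.mul_assoc Mᵀ (M * C) C, Matrix.mul_assoc M C C, hCC]
  have h1 : ((D * M)ᵀ * (D * M)).trace = -((M * C)ᵀ * (M * C)).trace := by
    rw [t1, t2, hSM]
    simp [Matrix.mul_neg, Matrix.trace_neg]
  have hz : ((D * M)ᵀ * (D * M)).trace = 0 := by
    have h2 := aux_trace_nonneg (D * M)
    have h3 := aux_trace_nonneg (M * C)
    linarith
  have hDM : D * M = 0 := aux_trace_eq_zero _ hz
  have hDdet : IsUnit D.det := by
    have : D.det * D.det = S.det := by rw [← Matrix.det_mul, hDD]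
    exact isUnit_of_mul_isUnit_left (this ▸ hdet)
  calc M = D⁻¹ * (D * M) := by rw [← Matrix.mul_assoc, Matrix.nonsing_inv_mul _ hDdet, Matrix.one_mul]
    _ = 0 := by rw [hDM, Matrix.mul_zero]

end aux

/-- `B·(I_r + BᵀB)^{-1/2} = (I_q + BBᵀ)^{-1/2}·B`. -/
theorem stmt_1 (q r : ℕ) (hq : 0 < q) (hr : 0 < r) (B : Matrix (Fin q) (Fin r) ℝ) :
    B * invSqrt (1 + Bᵀ * B) = invSqrt (1 + B * Bᵀ) * B := by
  have hBtB : (Bᵀ * B).PosSemidef := by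
    have := Matrix.posSemidef_conjTranspose_mul_self B
    rwa [Matrix.conjTranspose_eq_transpose_of_trivial] at this
  have hBBt : (B * Bᵀ).PosSemidef := by
    have := Matrix.posSemidef_self_mul_conjTranspose B
    rwa [Matrix.conjTranspose_eq_transpose_of_trivial] at this
  have hP : (1 + Bᵀ * B).PosDef := Matrix.PosDef.add_posSemidef Matrix.PosDef.one hBtB
  have hQ : (1 + B * Bᵀ).PosDef := Matrix.PosDef.add_posSemidef Matrix.PosDef.one hBBt
  have hPs : (1 + Bᵀ * B).PosSemidef := hP.posSemidef
  have hQs : (1 + B * Bᵀ).PosSemidef := hQ.posSemidef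
  have hiP : invSqrt (1 + Bᵀ * B) = hPs.sqrt⁻¹ := by
    rw [invSqrt, dif_pos hPs]; rfl
  have hiQ : invSqrt (1 + B * Bᵀ) = hQs.sqrt⁻¹ := by
    rw [invSqrt, dif_pos hQs]; rfl
  -- the key intertwining relation for the square roots
  have hcomm : (1 + B * Bᵀ) * B = B * (1 + Bᵀ * B) := by
    rw [Matrix.add_mul, Matrix.mul_add, Matrix.one_mul, Matrix.mul_one, Matrix.mul_assoc]
  have key : hQs.sqrt * B = B * hPs.sqrt := by
    have h0 : hQs.sqrt * (hQs.sqrt * B - B * hPs.sqrt)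
        + (hQs.sqrt * B - B * hPs.sqrt) * hPs.sqrt = 0 := by
      have e1 : hQs.sqrt * hQs.sqrt = 1 + B * Bᵀ := hQs.sqrt_mul_self
      have e2 : hPs.sqrt * hPs.sqrt = 1 + Bᵀ * B := hPs.sqrt_mul_self
      calc hQs.sqrt * (hQs.sqrt * B - B * hPs.sqrt)
            + (hQs.sqrt * B - B * hPs.sqrt) * hPs.sqrt
          = hQs.sqrt * hQs.sqrt * B - B * (hPs.sqrt * hPs.sqrt) := by
            rw [Matrix.mul_sub, Matrix.sub_mul, Matrix.mul_assoc, Matrix.mul_assoc,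
              Matrix.mul_assoc, sub_add_sub_cancel, ← Matrix.mul_assoc]
        _ = 0 := by rw [e1, e2, hcomm, sub_self]
    have hu : IsUnit (hQs.sqrt.det * hQs.sqrt.det) := by
      rw [← Matrix.det_mul, hQs.sqrt_mul_self]
      exact isUnit_iff_ne_zero.mpr hQ.det_pos.ne'
    have hzero := aux_sylvester hQs.posSemidef_sqrt hPs.posSemidef_sqrt
      (isUnit_of_mul_isUnit_left hu) h0
    have := sub_eq_zero.mp hzero
    exact this
  have hQdet : IsUnit hQs.sqrt.det := by
    have hu : IsUnit (hQs.sqrt.det * hQs.sqrt.det) := by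
      rw [← Matrix.det_mul, hQs.sqrt_mul_self]
      exact isUnit_iff_ne_zero.mpr hQ.det_pos.ne'
    exact isUnit_of_mul_isUnit_left hu
  have hPdet : IsUnit hPs.sqrt.det := by
    have hu : IsUnit (hPs.sqrt.det * hPs.sqrt.det) := by
      rw [← Matrix.det_mul, hPs.sqrt_mul_self]
      exact isUnit_iff_ne_zero.mpr hP.det_pos.ne'
    exact isUnit_of_mul_isUnit_left hu
  rw [hiP, hiQ]
  have : hQs.sqrt⁻¹ * (hQs.sqrt * B) * hPs.sqrt⁻¹
      = hQs.sqrt⁻¹ * (B * hPs.sqrt) * hPs.sqrt⁻¹ := by rw [key]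
  rwa [← Matrix.mul_assoc, Matrix.nonsing_inv_mul _ hQdet, Matrix.one_mul,
    Matrix.mul_assoc (hQs.sqrt⁻¹) (B * hPs.sqrt), Matrix.mul_assoc B,
    Matrix.mul_nonsing_inv _ hPdet, Matrix.mul_one] at this
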